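/- For every integer m ≥ 1 and all integers 0 ≤ k < n, B_m(n,k) = Σ_{j=0}^{⌊k/m⌋} C(n−mj−1, n−k−1), where C(a,b) denotes the binomial coefficient. -/

import Mathlib

/-- The `m`-th Pascal-like triangle of the first family: `B m n 0 = 1`,
`B m n n = 1` if `m ∣ n` and `0` otherwise, and Pascal's recurrence
`B m n k = B m (n-1) k + B m (n-1) (k-1)` for `0 < k < n`.
(Values with `k > n` are set to `0`.) -/
def B (m : ℕ) : ℕ → ℕ → ℕ
  | _, 0 => 1
  | 0, _ + 1 => 0
  | n + 1, k + 1 =>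
      if n + 1 = k + 1 then (if m ∣ (n + 1) then 1 else 0)
      else if n + 1 < k + 1 then 0
      else B m n (k + 1) + B m n k

lemma B_diag (m n : ℕ) : B m n n = if m ∣ n then 1 else 0 := by
  cases n with
  | zero => simp [B]
  | succ n => simp [B]

lemma B_rec (m n k : ℕ) (h : k + 1 < n + 1) :
    B m (n + 1) (k + 1) = B m n (k + 1) + B m n k := by
  rw [B]
  rw [if_neg (by omega), if_neg (by omega)]

theorem stmt_1 (m : ℕ) (hm : 1 ≤ m) (n k : ℕ) (hk : k < n) :
    B m n k = ∑ j ∈ Finset.range (k / m + 1),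
      Nat.choose (n - m * j - 1) (n - k - 1) := by
  induction n generalizing k with
  | zero => omega
  | succ n ih =>
    match k with
    | 0 =>
      simp [B, Finset.sum_range_one]
    | k + 1 =>
      rw [B_rec m n k hk]
      rcases eq_or_lt_of_le (Nat.succ_le_of_lt hk) with heq | hlt
      · -- k + 1 = n + 1, impossible? no: k+1+1 ≤ n+1 means k+1 ≤ n; heq : k+2 = n+1
        -- k + 1 = n
        have hkn : k + 1 = n := by omega
        subst hkn
        rw [B_diag]
        have hih := ih k (by omega)
        rw [hih]
        have h0 : ∀ j ∈ Finset.range (k / m + 1),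
            (k + 1 - m * j - 1).choose (k + 1 - k - 1) = 1 := by
          intro j hj; simp
        rw [Finset.sum_congr rfl h0, Finset.sum_const, smul_eq_mul, mul_one]
        have h1 : ∀ j ∈ Finset.range ((k + 1) / m + 1),
            (k + 1 + 1 - m * j - 1).choose (k + 1 + 1 - (k + 1) - 1) = 1 := by
          intro j hj; simp
        rw [Finset.sum_congr rfl h1, Finset.sum_const, smul_eq_mul, mul_one]
        rw [Nat.succ_div]
        simp only [Finset.card_range]
        by_cases hd : m ∣ (k + 1) <;> simp only [hd, if_true, if_false] <;> omega
      · -- k + 1 < n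
        have hih1 := ih (k + 1) (by omega)
        have hih2 := ih k (by omega)
        rw [hih1, hih2]
        -- termwise Pascal on the goal's RHS... rather transform LHS target sum
        have hbound : ∀ j, j < (k + 1) / m + 1 → m * j ≤ k + 1 := by
          intro j hj
          calc m * j ≤ m * ((k + 1) / m) := by
                exact Nat.mul_le_mul_left m (by omega)
            _ ≤ k + 1 := Nat.mul_div_le _ _
        have pascal : ∀ j ∈ Finset.range ((k + 1) / m + 1),
            (n + 1 - m * j - 1).choose (n + 1 - (k + 1) - 1)
              = (n - m * j - 1).choose (n - (k + 1) - 1)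
                + (n - m * j - 1).choose (n - k - 1) := by
          intro j hj
          rw [Finset.mem_range] at hj
          have hmj : m * j ≤ k + 1 := hbound j hj
          have e1 : n + 1 - m * j - 1 = (n - m * j - 1) + 1 := by omega
          have e2 : n + 1 - (k + 1) - 1 = (n - (k + 1) - 1) + 1 := by omega
          have e3 : n - (k + 1) - 1 + 1 = n - k - 1 := by omega
          rw [e1, e2, Nat.choose_succ_succ', e3]
        rw [Finset.sum_congr rfl pascal, Finset.sum_add_distrib]
        congr 1
        by_cases hd : m ∣ (k + 1)
        · have hdiv : (k + 1) / m = k / m + 1 := by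
            rw [Nat.succ_div, if_pos hd]
          have hz : (n - m * (k / m + 1) - 1).choose (n - k - 1) = 0 := by
            apply Nat.choose_eq_zero_of_lt
            have : m * (k / m + 1) = k + 1 := by
              rw [← hdiv, mul_comm]
              exact Nat.div_mul_cancel hd
            omega
          conv_rhs => rw [hdiv, Finset.sum_range_succ]
          rw [hz, add_zero]
        · have hdiv : (k + 1) / m = k / m := by
            rw [Nat.succ_div, if_neg hd, add_zero]
          rw [hdiv]
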